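/- Let A be an ISP-ring and let S be a multiplicatively closed subset of A consisting only of regular elements. Then the localization A_S is an ISP-ring. In particular, for every prime ideal P of A, the regular localization A_(P) is an ISP-ring. -/

import Mathlib

/-- An ideal is *regular* if it contains a regular element (a non-zero-divisor). -/
def Ideal.IsRegularIdeal {A : Type*} [CommRing A] (I : Ideal A) : Prop :=
  ∃ a ∈ I, a ∈ nonZeroDivisors A

/-- An ideal is *invertible* if it is regular, finitely generated and locally principal. -/
def Ideal.IsInvertibleIdeal {A : Type*} [CommRing A] (J : Ideal A) : Prop :=
  J.IsRegularIdeal ∧ J.FG ∧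
    ∀ M : Ideal A, ∀ hM : M.IsMaximal,
      haveI := hM.isPrime
      (J.map (algebraMap A (Localization.AtPrime M))).IsPrincipal

/-- `I` can be written as an invertible ideal times a nonempty product of
proper radical ideals. -/
def Ideal.HasISPFactorization {A : Type*} [CommRing A] (I : Ideal A) : Prop :=
  ∃ (J : Ideal A) (L : List (Ideal A)), J.IsInvertibleIdeal ∧ L ≠ [] ∧
    (∀ H ∈ L, H ≠ ⊤ ∧ H.IsRadical) ∧ I = J * L.prod

/-- An ISP-ring: every proper regular ideal factors as an invertible ideal times a
nonempty product of proper radical ideals. -/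
def IsISPRing (A : Type*) [CommRing A] : Prop :=
  ∀ I : Ideal A, I ≠ ⊤ → I.IsRegularIdeal → I.HasISPFactorization

/-- A strongly ISP-ring: every proper ideal factors as an invertible ideal times a
nonempty product of proper radical ideals. -/
def IsStronglyISPRing (A : Type*) [CommRing A] : Prop :=
  ∀ I : Ideal A, I ≠ ⊤ → I.HasISPFactorization

/-- An ISP-domain: an integral domain in which every proper nonzero ideal factors as an
invertible ideal times a nonempty product of proper radical ideals. -/
def IsISPDomain (A : Type*) [CommRing A] : Prop :=
  IsDomain A ∧ ∀ I : Ideal A, I ≠ ⊤ → I ≠ ⊥ → I.HasISPFactorization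

section Aux

variable {A : Type*} [CommRing A] (S : Submonoid A)

/-- The image of a radical ideal in a localization is radical. -/
theorem aux_map_isRadical {H : Ideal A} (hH : H.IsRadical) :
    (H.map (algebraMap A (Localization S))).IsRadical := by
  intro x hx
  obtain ⟨n, hn⟩ := hx
  obtain ⟨a, s, rfl⟩ := IsLocalization.exists_mk'_eq S x
  rcases Nat.eq_zero_or_pos n with rfl | hn0
  · rw [pow_zero] at hn
    have htop : H.map (algebraMap A (Localization S)) = ⊤ := (Ideal.eq_top_iff_one _).2 hn
    rw [htop]; exact Submodule.mem_top
  · rw [← IsLocalization.mk'_pow, IsLocalization.mk'_mem_map_algebraMap_iff S] at hn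
    obtain ⟨t, ht, htn⟩ := hn
    have h1 : (t * a) ^ n ∈ H := by
      have heq : (t * a) ^ n = t ^ (n - 1) * (t * a ^ n) := by
        rw [mul_pow, ← pow_sub_one_mul hn0.ne' t, mul_assoc]
      rw [heq]
      exact H.mul_mem_left _ htn
    have hta : t * a ∈ H := hH ⟨n, h1⟩
    have h2 : IsLocalization.mk' (Localization S) (a * ((⟨t, ht⟩ : S) : A)) (s * ⟨t, ht⟩) ∈
        H.map (algebraMap A (Localization S)) := by
      rw [IsLocalization.mk'_mem_map_algebraMap_iff S]
      refine ⟨1, S.one_mem, ?_⟩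
      rw [one_mul, mul_comm]
      exact hta
    rwa [IsLocalization.mk'_cancel] at h2

/-- The image of an invertible ideal in a localization is invertible. -/
theorem aux_map_isInvertibleIdeal {J : Ideal A} (hJ : J.IsInvertibleIdeal) :
    (J.map (algebraMap A (Localization S))).IsInvertibleIdeal := by
  obtain ⟨⟨a, haJ, hareg⟩, hfg, hloc⟩ := hJ
  refine ⟨⟨algebraMap A (Localization S) a, Ideal.mem_map_of_mem _ haJ,
    IsLocalization.map_nonZeroDivisors_le S (Localization S)
      (Submonoid.mem_map_of_mem _ hareg)⟩, hfg.map _, ?_⟩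
  intro M' hM'
  haveI := hM'.isPrime
  haveI hQp : (M'.comap (algebraMap A (Localization S))).IsPrime := Ideal.IsPrime.comap _
  set Q : Ideal A := M'.comap (algebraMap A (Localization S)) with hQdef
  obtain ⟨M, hM, hQM⟩ := Q.exists_le_maximal hQp.ne_top
  haveI := hM.isPrime
  obtain ⟨x, hx⟩ := (hloc M hM).principal
  haveI hlocQ : IsLocalization.AtPrime (Localization.AtPrime M') Q :=
    IsLocalization.isLocalization_atPrime_localization_atPrime S M'
  have hle : M.primeCompl ≤ Q.primeCompl.comap (RingHom.id A) := fun r hr hrQ => hr (hQM hrQ)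
  set g : Localization.AtPrime M →+* Localization.AtPrime M' :=
    IsLocalization.map (Localization.AtPrime M') (RingHom.id A) hle with hg
  have hcomp : (algebraMap (Localization S) (Localization.AtPrime M')).comp
      (algebraMap A (Localization S)) = g.comp (algebraMap A (Localization.AtPrime M)) := by
    rw [hg, IsLocalization.map_comp, RingHom.comp_id]
    exact (IsScalarTower.algebraMap_eq A (Localization S) (Localization.AtPrime M')).symm
  rw [Ideal.map_map, hcomp, ← Ideal.map_map, hx]
  exact ⟨⟨g x, (Ideal.map_span g {x}).trans (by rw [Set.image_singleton])⟩⟩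

theorem aux_map_list_prod (f : A →+* (Localization S)) (L : List (Ideal A)) :
    (L.prod).map f = (L.map (Ideal.map f)).prod := by
  induction L with
  | nil => simp [Ideal.one_eq_top, Ideal.map_top]
  | cons H tl ih => rw [List.prod_cons, Ideal.map_mul, ih, List.map_cons, List.prod_cons]

theorem aux_exists_good_list (L : List (Ideal A)) (hL : ∀ H ∈ L, H.IsRadical) :
    ∃ L' : List (Ideal (Localization S)),
      (∀ H' ∈ L', H' ≠ ⊤ ∧ H'.IsRadical) ∧
      L'.prod = (L.map (Ideal.map (algebraMap A (Localization S)))).prod := by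
  induction L with
  | nil => exact ⟨[], by simp, by simp⟩
  | cons H tl ih =>
    obtain ⟨L', h1, h2⟩ := ih (fun K hK => hL K (List.mem_cons_of_mem _ hK))
    by_cases hH : H.map (algebraMap A (Localization S)) = ⊤
    · exact ⟨L', h1, by rw [h2, List.map_cons, List.prod_cons, hH, Ideal.top_mul]⟩
    · refine ⟨H.map (algebraMap A (Localization S)) :: L', ?_, ?_⟩
      · intro H' hH'
        rcases List.mem_cons.1 hH' with rfl | h
        · exact ⟨hH, aux_map_isRadical S ((hL H List.mem_cons_self))⟩
        · exact h1 H' h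
      · rw [List.prod_cons, h2, List.map_cons, List.prod_cons]

theorem aux_isISPRing (hA : IsISPRing A) (hS : ∀ s ∈ S, s ∈ nonZeroDivisors A) :
    IsISPRing (Localization S) := by
  intro I' hI'top hI'reg
  have hmapI : (I'.comap (algebraMap A (Localization S))).map (algebraMap A (Localization S))
      = I' := IsLocalization.map_comap S _ I'
  set I := I'.comap (algebraMap A (Localization S)) with hI
  have hItop : I ≠ ⊤ := by
    intro h
    apply hI'top
    rw [← hmapI, h, Ideal.map_top]
  have hIreg : I.IsRegularIdeal := by
    obtain ⟨z, hzI, hzreg⟩ := hI'reg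
    obtain ⟨a, s, rfl⟩ := IsLocalization.exists_mk'_eq S z
    refine ⟨a, ?_, ?_⟩
    · rw [hI, Ideal.mem_comap]
      have h := I'.mul_mem_right (algebraMap A (Localization S) s) hzI
      rwa [IsLocalization.mk'_spec] at h
    · refine mem_nonZeroDivisors_iff_right.2 fun b hb => ?_
      have h1 : algebraMap A (Localization S) b * algebraMap A (Localization S) s *
          IsLocalization.mk' (Localization S) a s = 0 := by
        rw [mul_assoc, mul_comm (algebraMap A (Localization S) s), IsLocalization.mk'_spec,
          ← map_mul, hb, map_zero]
      have h2 : algebraMap A (Localization S) b * algebraMap A (Localization S) s = 0 :=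
        mem_nonZeroDivisors_iff_right.1 hzreg _ h1
      have h3 : algebraMap A (Localization S) b = 0 :=
        ((IsLocalization.map_units (Localization S) s).mul_left_eq_zero).1 h2
      exact (IsLocalization.to_map_eq_zero_iff (Localization S)
        (fun s hs => hS s hs)).1 h3
  obtain ⟨J, L, hJ, hLne, hLmem, hfac⟩ := hA I hItop hIreg
  obtain ⟨L', hL'mem, hL'prod⟩ := aux_exists_good_list S L (fun H hH => (hLmem H hH).2)
  have hI'fac : I' = (J.map (algebraMap A (Localization S))) * L'.prod := by
    rw [← hmapI, hfac, Ideal.map_mul, hL'prod, aux_map_list_prod]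
  by_cases hL' : L' = []
  · exfalso
    rw [hL', List.prod_nil, Ideal.one_eq_top, Ideal.mul_top] at hI'fac
    have hJI : J ≤ I := by
      intro x hx
      rw [hI, Ideal.mem_comap, hI'fac]
      exact Ideal.mem_map_of_mem _ hx
    have hIJ : I ≤ J := hfac ▸ Ideal.mul_le_left
    have hIeqJ : I = J := le_antisymm hIJ hJI
    have heq2 : I = L.prod * I := by
      nth_rewrite 1 [hfac]
      rw [← hIeqJ, mul_comm]
    have hle : I ≤ L.prod • I := by
      rw [Ideal.smul_eq_mul]
      exact le_of_eq heq2
    obtain ⟨r, hr1, hr0⟩ :=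
      Submodule.exists_sub_one_mem_and_smul_eq_zero_of_fg_of_le_smul L.prod I
        (hIeqJ ▸ hJ.2.1) hle
    obtain ⟨a, haI, hareg⟩ := hIreg
    have hra : r * a = 0 := by rw [← smul_eq_mul]; exact hr0 a haI
    have hr : r = 0 := mem_nonZeroDivisors_iff_right.1 hareg r hra
    rw [hr, zero_sub] at hr1
    have h1 : (1 : A) ∈ L.prod := by
      have := L.prod.neg_mem hr1
      rwa [neg_neg] at this
    obtain ⟨H, tl, rfl⟩ := List.exists_cons_of_ne_nil hLne
    have hHtop : H = ⊤ := (Ideal.eq_top_iff_one H).2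
      (Ideal.mul_le_left (List.prod_cons (l := tl) (a := H) ▸ h1))
    exact (hLmem H List.mem_cons_self).1 hHtop
  · exact ⟨J.map (algebraMap A (Localization S)), L',
      aux_map_isInvertibleIdeal S hJ, hL', hL'mem, hI'fac⟩

end Aux

/-- If `A` is an ISP-ring and `S` is a multiplicative set consisting of regular elements,
then `A_S` is an ISP-ring; in particular each regular localization `A_(P)` at a prime `P`
is an ISP-ring. -/
theorem isISPRing_localization {A : Type*} [CommRing A] (hA : IsISPRing A)
    (S : Submonoid A) (hS : ∀ s ∈ S, s ∈ nonZeroDivisors A) :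
    IsISPRing (Localization S) ∧
      ∀ (P : Ideal A) (hP : P.IsPrime),
        IsISPRing (Localization (nonZeroDivisors A ⊓ @Ideal.primeCompl A _ P hP)) := by
  refine ⟨aux_isISPRing S hA hS, fun P hP => aux_isISPRing _ hA (fun s hs => hs.1)⟩
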